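/- For c, λ, μ, q > 0 with (q+λ)² - cλμ < 0 and W_q(x) = ((μ+γ₁)e^{γ₁x} - (μ+γ₂)e^{γ₂x})/(c(γ₁-γ₂)), the derivative W_q'(x) attains its unique global minimum on [0,∞) at b* = (1/(γ₁-γ₂)) log(γ₂²(μ+γ₂)/(γ₁²(μ+γ₁))). -/

import Mathlib

private lemma stmt5_aux (c mu γ₁ γ₂ : ℝ) (hc : 0 < c) (hd : 0 < γ₁ - γ₂) (hmuγ₁ : 0 < mu + γ₁)
    (hγ₁ : 0 < γ₁) :
    (mu + γ₂) / (c * (γ₁ - γ₂)) * γ₂ ^ 2 =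
      (mu + γ₁) / (c * (γ₁ - γ₂)) * γ₁ ^ 2 * ((γ₂ ^ 2 * (mu + γ₂)) / (γ₁ ^ 2 * (mu + γ₁))) := by
  have h1 : c * (γ₁ - γ₂) ≠ 0 := by positivity
  have h2 : γ₁ ^ 2 * (mu + γ₁) ≠ 0 := by positivity
  field_simp


theorem stmt5 (c lam mu q γ₁ γ₂ : ℝ) (hc : 0 < c) (hlam : 0 < lam) (hmu : 0 < mu) (hq : 0 < q)
    (hcond : (q + lam) ^ 2 - c * lam * mu < 0)
    (hγ₂ : γ₂ < 0) (hγ₁ : 0 < γ₁)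
    (hroot1 : c * γ₁ ^ 2 + γ₁ * (c * mu - lam - q) - q * mu = 0)
    (hroot2 : c * γ₂ ^ 2 + γ₂ * (c * mu - lam - q) - q * mu = 0)
    (W : ℝ → ℝ)
    (hW : W = fun x => ((mu + γ₁) * Real.exp (γ₁ * x) - (mu + γ₂) * Real.exp (γ₂ * x)) / (c * (γ₁ - γ₂)))
    (bstar : ℝ)
    (hb : bstar = (1 / (γ₁ - γ₂)) * Real.log ((γ₂ ^ 2 * (mu + γ₂)) / (γ₁ ^ 2 * (mu + γ₁)))) :
    bstar ∈ Set.Ici (0 : ℝ) ∧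
      ∀ x ∈ Set.Ici (0 : ℝ), x ≠ bstar → deriv W bstar < deriv W x := by
  have hd : 0 < γ₁ - γ₂ := by linarith
  have hd' : γ₁ - γ₂ ≠ 0 := ne_of_gt hd
  -- Vieta
  have hsum : c * (γ₁ + γ₂) = lam + q - c * mu := by
    have h := sub_eq_zero.mpr (hroot1.trans hroot2.symm)
    have h2 : (γ₁ - γ₂) * (c * (γ₁ + γ₂) - (lam + q - c * mu)) = 0 := by ring_nf; nlinarith [h]
    rcases mul_eq_zero.mp h2 with h3 | h3
    · exact absurd h3 hd'
    · linarith
  have hprod : c * (γ₁ * γ₂) = -(q * mu) := by nlinarith [hroot1, hsum, hγ₁, hγ₁.ne']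
  -- positivity of mu + γ₂
  have hmuγ₂ : 0 < mu + γ₂ := by
    have hcγ₂ : c * γ₂ - q < 0 := by nlinarith
    have hfac : (γ₂ + mu) * (c * γ₂ - q) = lam * γ₂ := by linarith [hroot2]; 
    nlinarith [mul_neg_of_pos_of_neg hlam hγ₂]
  have hmuγ₁ : 0 < mu + γ₁ := by linarith
  -- key inequality from hcond
  have hkey : γ₁ ^ 2 * (mu + γ₁) < γ₂ ^ 2 * (mu + γ₂) := by
    have hident : c ^ 2 * (mu * (γ₁ + γ₂) + (γ₁ + γ₂) ^ 2 - γ₁ * γ₂) =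
        (q + lam) ^ 2 - c * lam * mu := by
      nlinarith [hsum, hprod, hc.ne']
    have h2 : mu * (γ₁ + γ₂) + (γ₁ + γ₂) ^ 2 - γ₁ * γ₂ < 0 := by nlinarith [sq_nonneg c]
    nlinarith [hd]
  have hden : 0 < γ₁ ^ 2 * (mu + γ₁) := by positivity
  have hR1 : 1 < (γ₂ ^ 2 * (mu + γ₂)) / (γ₁ ^ 2 * (mu + γ₁)) := (one_lt_div hden).mpr hkey
  have hRpos : 0 < (γ₂ ^ 2 * (mu + γ₂)) / (γ₁ ^ 2 * (mu + γ₁)) := lt_trans one_pos hR1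
  set R := (γ₂ ^ 2 * (mu + γ₂)) / (γ₁ ^ 2 * (mu + γ₁)) with hRdef
  have hbpos : 0 < bstar := by
    rw [hb]
    exact mul_pos (by positivity) (Real.log_pos hR1)
  have hexp : Real.exp ((γ₁ - γ₂) * bstar) = R := by
    rw [hb]
    rw [show (γ₁ - γ₂) * ((1 / (γ₁ - γ₂)) * Real.log R) = Real.log R by field_simp]
    exact Real.exp_log hRpos
  -- coefficients
  set A := (mu + γ₁) / (c * (γ₁ - γ₂)) with hA
  set B := (mu + γ₂) / (c * (γ₁ - γ₂)) with hB
  have hApos : 0 < A := by positivity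
  have hBpos : 0 < B := by positivity
  have hWeq : W = fun x => A * Real.exp (γ₁ * x) - B * Real.exp (γ₂ * x) := by
    rw [hW]; funext x; rw [hA, hB]; ring
  -- first derivative
  have hder1 : ∀ x, HasDerivAt W (A * γ₁ * Real.exp (γ₁ * x) - B * γ₂ * Real.exp (γ₂ * x)) x := by
    intro x
    rw [hWeq]
    have h1 : HasDerivAt (fun x => Real.exp (γ₁ * x)) (γ₁ * Real.exp (γ₁ * x)) x := by
      simpa [mul_comm, Function.comp_def] using (Real.hasDerivAt_exp (γ₁ * x)).comp x ((hasDerivAt_id x).const_mul γ₁)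
    have h2 : HasDerivAt (fun x => Real.exp (γ₂ * x)) (γ₂ * Real.exp (γ₂ * x)) x := by
      simpa [mul_comm, Function.comp_def] using (Real.hasDerivAt_exp (γ₂ * x)).comp x ((hasDerivAt_id x).const_mul γ₂)
    simpa [mul_assoc, Pi.sub_def] using (h1.const_mul A).sub (h2.const_mul B)
  set G : ℝ → ℝ := fun x => A * γ₁ * Real.exp (γ₁ * x) - B * γ₂ * Real.exp (γ₂ * x) with hG
  have hderivW : deriv W = G := funext fun x => (hder1 x).deriv
  -- second derivative
  have hder2 : ∀ x, HasDerivAt G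
      (A * γ₁ ^ 2 * Real.exp (γ₁ * x) - B * γ₂ ^ 2 * Real.exp (γ₂ * x)) x := by
    intro x
    have h1 : HasDerivAt (fun x => Real.exp (γ₁ * x)) (γ₁ * Real.exp (γ₁ * x)) x := by
      simpa [mul_comm, Function.comp_def] using (Real.hasDerivAt_exp (γ₁ * x)).comp x ((hasDerivAt_id x).const_mul γ₁)
    have h2 : HasDerivAt (fun x => Real.exp (γ₂ * x)) (γ₂ * Real.exp (γ₂ * x)) x := by
      simpa [mul_comm, Function.comp_def] using (Real.hasDerivAt_exp (γ₂ * x)).comp x ((hasDerivAt_id x).const_mul γ₂)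
    have := (h1.const_mul (A * γ₁)).sub (h2.const_mul (B * γ₂))
    simp only [Pi.sub_def] at this
    exact this.congr_deriv (by ring)
  -- key sign identity
  have hAB : B * γ₂ ^ 2 = A * γ₁ ^ 2 * Real.exp ((γ₁ - γ₂) * bstar) := by
    rw [hexp, hRdef, hA, hB]
    exact stmt5_aux c mu γ₁ γ₂ hc hd hmuγ₁ hγ₁
  have hsign : ∀ x : ℝ, A * γ₁ ^ 2 * Real.exp (γ₁ * x) - B * γ₂ ^ 2 * Real.exp (γ₂ * x) =
      A * γ₁ ^ 2 * (Real.exp ((γ₁ - γ₂) * x) - Real.exp ((γ₁ - γ₂) * bstar)) *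
        Real.exp (γ₂ * x) := by
    intro x
    rw [hAB, show γ₁ * x = (γ₁ - γ₂) * x + γ₂ * x by ring, Real.exp_add]
    ring
  have hAγpos : 0 < A * γ₁ ^ 2 := by positivity
  have hderivG : ∀ x, deriv G x =
      A * γ₁ ^ 2 * Real.exp (γ₁ * x) - B * γ₂ ^ 2 * Real.exp (γ₂ * x) :=
    fun x => (hder2 x).deriv
  have hGcont : Continuous G := by
    fun_prop
  -- strict antitone on [0, bstar]
  have hanti : StrictAntiOn G (Set.Icc 0 bstar) := by
    apply strictAntiOn_of_deriv_neg (convex_Icc 0 bstar) hGcont.continuousOn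
    intro x hx
    rw [interior_Icc] at hx
    rw [hderivG, hsign]
    apply mul_neg_of_neg_of_pos _ (Real.exp_pos _)
    apply mul_neg_of_pos_of_neg hAγpos
    rw [sub_neg]
    exact Real.exp_lt_exp.mpr (mul_lt_mul_of_pos_left hx.2 hd)
  have hmono : StrictMonoOn G (Set.Ici bstar) := by
    apply strictMonoOn_of_deriv_pos (convex_Ici bstar) hGcont.continuousOn
    intro x hx
    rw [interior_Ici] at hx
    rw [hderivG, hsign]
    apply mul_pos _ (Real.exp_pos _)
    apply mul_pos hAγpos
    rw [sub_pos]
    exact Real.exp_lt_exp.mpr (mul_lt_mul_of_pos_left hx hd)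
  refine ⟨le_of_lt hbpos, ?_⟩
  intro x hx hxne
  rw [hderivW]
  rcases lt_or_gt_of_ne hxne with hlt | hgt
  · exact hanti ⟨hx, le_of_lt hlt⟩ ⟨le_of_lt hbpos, le_refl _⟩ hlt
  · exact hmono Set.self_mem_Ici (le_of_lt hgt) hgt
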